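/- Let N ≥ 1 and v_1 ≤ v_3 ≤ ... ≤ v_{2N+1} with v_1 < v_{2N+1}. Then F(a) = (Σ_{k=0}^{N} v_{2k+1} a^{2k})/(Σ_{k=0}^{N} a^{2k}) is strictly increasing in a on [0,2]. -/

import Mathlib

open Finset

/-- If `v_1 ≤ v_3 ≤ … ≤ v_{2N+1}` with `v_1 < v_{2N+1}`, then
`F(a) = (Σ_{k=0}^N v_{2k+1} a^{2k})/(Σ_{k=0}^N a^{2k})` is strictly increasing
on `[0,2]`. -/
theorem F_strictMono (N : ℕ) (hN : 1 ≤ N) (v : ℕ → ℝ)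
    (hmono : ∀ k : ℕ, 1 ≤ k → k ≤ N → v (2*k-1) ≤ v (2*k+1))
    (hlt : v 1 < v (2*N+1)) :
    StrictMonoOn
      (fun a : ℝ => (∑ k ∈ Finset.range (N+1), v (2*k+1) * a^(2*k)) /
        (∑ k ∈ Finset.range (N+1), a^(2*k)))
      (Set.Icc 0 2) := by
  set t : ℕ → ℝ := fun k => v (2*k+1) with ht
  have tmono : ∀ k, k ≤ N → ∀ j, j ≤ k → t j ≤ t k := by
    intro k
    induction k with
    | zero => intro _ j hj; interval_cases j; exact le_refl _
    | succ k ih =>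
      intro hk j hj
      have step : t k ≤ t (k+1) := by
        have h := hmono (k+1) (by omega) hk
        have e : 2*(k+1)-1 = 2*k+1 := by omega
        rw [e] at h; exact h
      rcases Nat.lt_succ_iff_lt_or_eq.mp (Nat.lt_succ_of_le hj) with h | h
      · exact le_trans (ih (by omega) j (by omega)) step
      · subst h; exact le_refl _
  intro a ha b hb hab
  simp only
  have ha0 : (0:ℝ) ≤ a := ha.1
  have hb0 : (0:ℝ) ≤ b := hb.1
  have hab' : a ≤ b := le_of_lt hab
  -- denominators positive
  have hden : ∀ x : ℝ, 0 < ∑ k ∈ range (N+1), x^(2*k) := by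
    intro x
    apply Finset.sum_pos'
    · intro i _
      rw [pow_mul]
      positivity
    · exact ⟨0, Finset.mem_range.mpr (by omega), by norm_num⟩
  rw [div_lt_div_iff₀ (hden a) (hden b)]
  -- power inequality
  have powle : ∀ j k : ℕ, j ≤ k → a^(2*k)*b^(2*j) ≤ b^(2*k)*a^(2*j) := by
    intro j k hjk
    obtain ⟨m, rfl⟩ : ∃ m, k = j + m := ⟨k - j, by omega⟩
    have h1 : a^(2*m) ≤ b^(2*m) := pow_le_pow_left₀ ha0 hab' _
    have e1 : a^(2*(j+m))*b^(2*j) = (a^(2*j)*b^(2*j)) * a^(2*m) := by ring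
    have e2 : b^(2*(j+m))*a^(2*j) = (a^(2*j)*b^(2*j)) * b^(2*m) := by ring
    rw [e1, e2]
    exact mul_le_mul_of_nonneg_left h1 (by positivity)
  -- key double sum positivity
  have key : 0 < ∑ k ∈ range (N+1), ∑ j ∈ range (N+1),
      (t k - t j) * (b^(2*k)*a^(2*j) - a^(2*k)*b^(2*j)) := by
    have nonneg : ∀ k ∈ range (N+1), ∀ j ∈ range (N+1),
        0 ≤ (t k - t j) * (b^(2*k)*a^(2*j) - a^(2*k)*b^(2*j)) := by
      intro k hk j hj
      rw [Finset.mem_range] at hk hj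
      rcases le_total j k with h | h
      · exact mul_nonneg (sub_nonneg.mpr (tmono k (by omega) j h))
          (sub_nonneg.mpr (powle j k h))
      · have := mul_nonneg (sub_nonneg.mpr (tmono j (by omega) k h))
          (sub_nonneg.mpr (powle k j h))
        nlinarith [this]
    apply Finset.sum_pos'
    · intro k hk
      exact Finset.sum_nonneg (fun j hj => nonneg k hk j hj)
    · refine ⟨N, Finset.mem_range.mpr (by omega), ?_⟩
      apply Finset.sum_pos'
      · intro j hj; exact nonneg N (Finset.mem_range.mpr (by omega)) j hj
      · refine ⟨0, Finset.mem_range.mpr (by omega), ?_⟩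
        have h1 : t 0 < t N := hlt
        have h2 : a^(2*N) < b^(2*N) :=
          pow_lt_pow_left₀ hab ha0 (by omega)
        have : (0:ℝ) < (t N - t 0) * (b^(2*N) - a^(2*N)) := by nlinarith
        simpa using this
  -- identity
  have ident : ∑ k ∈ range (N+1), ∑ j ∈ range (N+1),
      (t k - t j) * (b^(2*k)*a^(2*j) - a^(2*k)*b^(2*j))
      = 2 * ((∑ k ∈ range (N+1), t k * b^(2*k)) * (∑ j ∈ range (N+1), a^(2*j))
           - (∑ k ∈ range (N+1), t k * a^(2*k)) * (∑ j ∈ range (N+1), b^(2*j))) := by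
    have expand : ∀ k j : ℕ, (t k - t j) * (b^(2*k)*a^(2*j) - a^(2*k)*b^(2*j))
        = (t k * b^(2*k) * a^(2*j) - t k * a^(2*k) * b^(2*j))
        + (t j * b^(2*j) * a^(2*k) - t j * a^(2*j) * b^(2*k)) := fun k j => by ring
    have e1 : ∀ (x y : ℝ), ∑ k ∈ range (N+1), ∑ j ∈ range (N+1),
        t k * x^(2*k) * y^(2*j)
        = (∑ k ∈ range (N+1), t k * x^(2*k)) * (∑ j ∈ range (N+1), y^(2*j)) := by
      intro x y; rw [Finset.sum_mul_sum]
    simp_rw [expand, Finset.sum_add_distrib, Finset.sum_sub_distrib]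
    rw [Finset.sum_comm (s := range (N+1)) (t := range (N+1))
        (f := fun k j => t j * b^(2*j) * a^(2*k)),
      Finset.sum_comm (s := range (N+1)) (t := range (N+1))
        (f := fun k j => t j * a^(2*j) * b^(2*k)),
      e1 b a, e1 a b]
    ring
  linarith [key, ident ▸ key]
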